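/- Let R = 𝔽₂[h] be the polynomial ring over the field with two elements, and let C be the free R-module with basis e₀, e₁, e₂, e₃. Define the R-linear map D : C → C by D(e₀) = D(e₁) = e₂ + e₃ + h·(e₀ + e₁) and D(e₂) = D(e₃) = e₀ + e₁ + h·(e₂ + e₃). Then D∘D = 0, and the homology ker D / im D is isomorphic as an R-module to R/(h² + 1). -/

import Mathlib

/-- Basis vector `eᵢ` of the free module `𝔽₂[h]⁴`. -/
noncomputable def e (i : Fin 4) : Fin 4 → Polynomial (ZMod 2) :=
  Pi.single i 1

/-- The variable `h` of `𝔽₂[h]`. -/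
noncomputable def hvar : Polynomial (ZMod 2) := Polynomial.X

set_option maxHeartbeats 1000000 in
/-- The polynomial ℤ/2-equivariant Floer complex of the pair
(ℝ², Clifford torus) in ℂ²: on the free `𝔽₂[h]`-module with basis
`e₀, e₁, e₂, e₃`, the `𝔽₂[h]`-linear map `D` with
`D(e₀) = D(e₁) = e₂ + e₃ + h·(e₀ + e₁)` and `D(e₂) = D(e₃) = e₀ + e₁ + h·(e₂ + e₃)`
squares to zero, and its homology `ker D / im D` is isomorphic as an
`𝔽₂[h]`-module to `𝔽₂[h]/(h² + 1)`. -/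
theorem stmt19
    (D : (Fin 4 → Polynomial (ZMod 2)) →ₗ[Polynomial (ZMod 2)]
      (Fin 4 → Polynomial (ZMod 2)))
    (hD0 : D (e 0) = e 2 + e 3 + hvar • (e 0 + e 1))
    (hD1 : D (e 1) = e 2 + e 3 + hvar • (e 0 + e 1))
    (hD2 : D (e 2) = e 0 + e 1 + hvar • (e 2 + e 3))
    (hD3 : D (e 3) = e 0 + e 1 + hvar • (e 2 + e 3)) :
    D ∘ₗ D = 0 ∧
    Nonempty
      ((↥(LinearMap.ker D) ⧸
          Submodule.comap (LinearMap.ker D).subtype (LinearMap.range D))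
        ≃ₗ[Polynomial (ZMod 2)]
       (Polynomial (ZMod 2) ⧸
          Ideal.span {(Polynomial.X : Polynomial (ZMod 2)) ^ 2 + 1})) := by
  set R := Polynomial (ZMod 2) with hR
  set X : R := Polynomial.X with hX
  have two : (2 : R) = 0 := by
    have : ((2 : ℕ) : R) = 0 := by
      rw [← Polynomial.C_eq_natCast]
      norm_num
      rfl
    simpa using this
  have key : ∀ x : Fin 4 → R, D x =
      ![X*(x 0 + x 1) + (x 2 + x 3), X*(x 0 + x 1) + (x 2 + x 3),
        (x 0 + x 1) + X*(x 2 + x 3), (x 0 + x 1) + X*(x 2 + x 3)] := by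
    intro x
    have hx : x = x 0 • e 0 + x 1 • e 1 + x 2 • e 2 + x 3 • e 3 := by
      funext j; fin_cases j <;> simp [e, Pi.single_apply]
    conv_lhs => rw [hx]
    simp only [map_add, map_smul, hD0, hD1, hD2, hD3]
    funext j
    fin_cases j <;> simp [e, Pi.single_apply, hvar, hX] <;> ring
  have hne : (X ^ 2 + 1 : R) ≠ 0 := by
    have := Polynomial.X_pow_add_C_ne_zero (R := ZMod 2) (n := 2) (by norm_num) 1
    simpa [hX] using this
  have hker : ∀ x : Fin 4 → R, x ∈ LinearMap.ker D ↔ (x 0 + x 1 = 0 ∧ x 2 + x 3 = 0) := by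
    intro x
    rw [LinearMap.mem_ker, key]
    constructor
    · intro hz
      have h0 := congrFun hz 0
      have h2 := congrFun hz 2
      simp at h0 h2
      constructor
      · have hA : (X ^ 2 + 1) * (x 0 + x 1) = 0 := by
          linear_combination X * h0 + h2 - X * (x 2 + x 3) * two
        exact (mul_eq_zero.mp hA).resolve_left hne
      · have hB : (X ^ 2 + 1) * (x 2 + x 3) = 0 := by
          linear_combination h0 + X * h2 - X * (x 0 + x 1) * two
        exact (mul_eq_zero.mp hB).resolve_left hne
    · rintro ⟨hA, hB⟩
      funext j
      fin_cases j <;> simp <;>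
        first
        | linear_combination X * hA + hB
        | linear_combination hA + X * hB
  constructor
  · refine LinearMap.ext fun x => ?_
    rw [LinearMap.comp_apply, key (D x), key x]
    funext j
    fin_cases j <;> simp <;>
      first
      | linear_combination (X*(X*(x 0 + x 1) + (x 2 + x 3)) + ((x 0 + x 1) + X*(x 2 + x 3))) * two
      | linear_combination ((X*(x 0 + x 1) + (x 2 + x 3)) + X*((x 0 + x 1) + X*(x 2 + x 3))) * two
  · set I : Ideal R := Ideal.span {X ^ 2 + 1} with hI
    set π : (Fin 4 → R) →ₗ[R] R := LinearMap.proj 0 + X • LinearMap.proj 2 with hπ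
    set φ : (LinearMap.ker D) →ₗ[R] (R ⧸ I) :=
      I.mkQ ∘ₗ (π ∘ₗ (LinearMap.ker D).subtype) with hφ
    have hφapp : ∀ x : LinearMap.ker D,
        φ x = I.mkQ ((x : Fin 4 → R) 0 + X * (x : Fin 4 → R) 2) := by
      intro x; simp [hφ, hπ, smul_eq_mul]
    have hsurj : Function.Surjective φ := by
      intro c
      obtain ⟨p, rfl⟩ := Submodule.Quotient.mk_surjective I c
      refine ⟨⟨![p, p, 0, 0], ?_⟩, ?_⟩
      · rw [hker]
        constructor
        · show p + p = 0
          linear_combination p * two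
        · show (0 : R) + 0 = 0
          ring
      · rw [hφapp]
        show I.mkQ (p + X * 0) = _
        rw [Submodule.mkQ_apply, mul_zero, add_zero]
    have hkereq : LinearMap.ker φ =
        Submodule.comap (LinearMap.ker D).subtype (LinearMap.range D) := by
      ext ⟨x, hx⟩
      rw [LinearMap.mem_ker, hφapp]
      simp only [Submodule.mem_comap, Submodule.coe_subtype, LinearMap.mem_range]
      rw [Submodule.mkQ_apply, Submodule.Quotient.mk_eq_zero, hI,
        Ideal.mem_span_singleton]
      obtain ⟨hA, hB⟩ := (hker x).mp hx
      constructor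
      · rintro ⟨q, hq⟩
        refine ⟨![X * q + x 2, 0, x 0 + X * (X * q + x 2), 0], ?_⟩
        rw [key]
        funext j
        fin_cases j <;> simp <;>
          first
          | linear_combination (X^2*q + X*x 2) * two
          | linear_combination hA + (X^2*q + X*x 2 - x 1) * two
          | linear_combination X * hq + (X*q + X^3*q) * two
          | linear_combination X * hq + (X*q + X^3*q - x 3) * two + hB
      · rintro ⟨y, rfl⟩
        rw [key]
        refine ⟨y 2 + y 3, ?_⟩
        simp only [Matrix.cons_val_zero, Matrix.cons_val_two, Matrix.tail_cons,
          Matrix.head_cons]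
        linear_combination (X * (y 0 + y 1)) * two
    exact ⟨(Submodule.quotEquivOfEq _ _ hkereq.symm).trans
      (φ.quotKerEquivOfSurjective hsurj)⟩
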